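/- Let c_v > 0, 0 < ϱ₋ < ϱ₊, p₋, p₊ > 0, ϱ₁ > ϱ₊ and v₋ ∈ ℝ; set R := ϱ₋ − ϱ₊ and, for u > 0, v₊ := v₋ − u, A := ϱ₋v₋ − ϱ₊v₊, B := ϱ₋ϱ₊u² − (ϱ₊ − ϱ₋)(p₊ − p₋), μ₀ := A/R − (1/R)·√(B(ϱ₁−ϱ₊)/(ϱ₁−ϱ₋)), μ₁ := A/R − (1/R)·√(B(ϱ₁−ϱ₋)/(ϱ₁−ϱ₊)), Y := ϱ₁ϱ₊·(v₋+μ₀)/(v₋−μ₀) + ϱ₁ϱ₋·(μ₁+v₊)/(μ₁−v₊), X := ϱ₊ϱ₋(p₋ − p₊) + (2c_v+1)ϱ₁(ϱ₋p₊ − ϱ₊p₋), Z := p₊ + ((ϱ₁−ϱ₊)ϱ₊/ϱ₁)·(v₊ − μ₁)², p₁ := (YZ − X)/(Y + ϱ₁R), and ε₁ := (ϱ₁RZ + X)/(ϱ₁(Y + ϱ₁R)). Then there exists u₀ > 0 such that for all u ≥ u₀: p₁ > 0 and ε₁ > 0. -/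

import Mathlib

noncomputable section

/-- `B = ϱ₋ϱ₊u² − (ϱ₊ − ϱ₋)(p₊ − p₋)`. -/
def Bu (ϱm ϱp pm pp u : ℝ) : ℝ := ϱm * ϱp * u ^ 2 - (ϱp - ϱm) * (pp - pm)

/-- The left interface speed `μ₀ = A/R − (1/R)·√(B(ϱ₁−ϱ₊)/(ϱ₁−ϱ₋))`,
with `v₋` fixed and `v₊ = v₋ − u`. -/
def mu0u (ϱm ϱp pm pp ϱ1 vm u : ℝ) : ℝ :=
  (ϱm * vm - ϱp * (vm - u)) / (ϱm - ϱp) -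
    (1 / (ϱm - ϱp)) * Real.sqrt (Bu ϱm ϱp pm pp u * ((ϱ1 - ϱp) / (ϱ1 - ϱm)))

/-- The right interface speed `μ₁ = A/R − (1/R)·√(B(ϱ₁−ϱ₋)/(ϱ₁−ϱ₊))`,
with `v₋` fixed and `v₊ = v₋ − u`. -/
def mu1u (ϱm ϱp pm pp ϱ1 vm u : ℝ) : ℝ :=
  (ϱm * vm - ϱp * (vm - u)) / (ϱm - ϱp) -
    (1 / (ϱm - ϱp)) * Real.sqrt (Bu ϱm ϱp pm pp u * ((ϱ1 - ϱm) / (ϱ1 - ϱp)))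

/-- `Y = ϱ₁ϱ₊·(v₋+μ₀)/(v₋−μ₀) + ϱ₁ϱ₋·(μ₁+v₊)/(μ₁−v₊)`. -/
def Yu (ϱm ϱp pm pp ϱ1 vm u : ℝ) : ℝ :=
  ϱ1 * ϱp * ((vm + mu0u ϱm ϱp pm pp ϱ1 vm u) / (vm - mu0u ϱm ϱp pm pp ϱ1 vm u)) +
  ϱ1 * ϱm * ((mu1u ϱm ϱp pm pp ϱ1 vm u + (vm - u)) /
    (mu1u ϱm ϱp pm pp ϱ1 vm u - (vm - u)))

/-- `X = ϱ₊ϱ₋(p₋ − p₊) + (2c_v+1)ϱ₁(ϱ₋p₊ − ϱ₊p₋)`. -/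
def Xu (cv ϱm ϱp pm pp ϱ1 : ℝ) : ℝ :=
  ϱp * ϱm * (pm - pp) + (2 * cv + 1) * ϱ1 * (ϱm * pp - ϱp * pm)

/-- `Z = p₊ + ((ϱ₁−ϱ₊)ϱ₊/ϱ₁)(v₊ − μ₁)²`, with `v₊ = v₋ − u`. -/
def Zu (ϱm ϱp pm pp ϱ1 vm u : ℝ) : ℝ :=
  pp + ((ϱ1 - ϱp) * ϱp / ϱ1) * ((vm - u) - mu1u ϱm ϱp pm pp ϱ1 vm u) ^ 2

/-- The middle pressure `p₁ = (YZ − X)/(Y + ϱ₁R)` with `R = ϱ₋ − ϱ₊`. -/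
def p1u (cv ϱm ϱp pm pp ϱ1 vm u : ℝ) : ℝ :=
  (Yu ϱm ϱp pm pp ϱ1 vm u * Zu ϱm ϱp pm pp ϱ1 vm u - Xu cv ϱm ϱp pm pp ϱ1) /
    (Yu ϱm ϱp pm pp ϱ1 vm u + ϱ1 * (ϱm - ϱp))

/-- The subsolution parameter `ε₁ = (ϱ₁RZ + X)/(ϱ₁(Y + ϱ₁R))` with `R = ϱ₋ − ϱ₊`. -/
def eps1u (cv ϱm ϱp pm pp ϱ1 vm u : ℝ) : ℝ :=
  (ϱ1 * (ϱm - ϱp) * Zu ϱm ϱp pm pp ϱ1 vm u + Xu cv ϱm ϱp pm pp ϱ1) /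
    (ϱ1 * (Yu ϱm ϱp pm pp ϱ1 vm u + ϱ1 * (ϱm - ϱp)))

/-- The second component `β = (ϱ₊v₊ + μ₁(ϱ₁−ϱ₊))/ϱ₁` of the middle velocity,
with `v₊ = v₋ − u`. -/
def betau (ϱm ϱp pm pp ϱ1 vm u : ℝ) : ℝ :=
  (ϱp * (vm - u) + mu1u ϱm ϱp pm pp ϱ1 vm u * (ϱ1 - ϱp)) / ϱ1

/-- The subsolution parameter `ε₂`. -/
def eps2u (cv ϱm ϱp pm pp ϱ1 vm u : ℝ) : ℝ :=
  (1 / (ϱ1 * ϱp)) *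
      ((ϱ1 - ϱp) * (p1u cv ϱm ϱp pm pp ϱ1 vm u + pp) +
        2 * cv * (ϱ1 * pp - ϱp * p1u cv ϱm ϱp pm pp ϱ1 vm u)) +
    eps1u cv ϱm ϱp pm pp ϱ1 vm u *
      (((vm - u) + betau ϱm ϱp pm pp ϱ1 vm u) /
          ((vm - u) - betau ϱm ϱp pm pp ϱ1 vm u) * ((ϱ1 - ϱp) / ϱp) - 1)
private lemma divdiv (a b u : ℝ) (hu : u ≠ 0) : (a/u)/(b/u) = a/b := by
  rw [div_div_div_comm, div_self hu, div_one]

set_option maxHeartbeats 1600000 in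
/-- **Lemma (positivity of the middle pressure `p₁` and of `ε₁`, case
`ϱ₋ < ϱ₊`).** For `u = v₋ − v₊` sufficiently large (with `v₋` fixed), both
`p₁ = (YZ − X)/(Y + ϱ₁R)` and `ε₁ = (ϱ₁RZ + X)/(ϱ₁(Y + ϱ₁R))` are positive. -/
theorem p1_eps1_positive_large_u
    (cv ϱm ϱp pm pp ϱ1 vm : ℝ)
    (hcv : 0 < cv) (hϱm : 0 < ϱm) (hϱmp : ϱm < ϱp)
    (hpm : 0 < pm) (hpp : 0 < pp) (hϱ1 : ϱp < ϱ1) :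
    ∃ u0 : ℝ, 0 < u0 ∧ ∀ u : ℝ, u0 ≤ u →
      0 < p1u cv ϱm ϱp pm pp ϱ1 vm u ∧
      0 < eps1u cv ϱm ϱp pm pp ϱ1 vm u := by
  have hϱp : 0 < ϱp := hϱm.trans hϱmp
  have hϱ1p : 0 < ϱ1 := hϱp.trans hϱ1
  have hd : (0:ℝ) < ϱp - ϱm := sub_pos.mpr hϱmp
  have he0 : (0:ℝ) < ϱ1 - ϱp := sub_pos.mpr hϱ1
  have he1 : (0:ℝ) < ϱ1 - ϱm := sub_pos.mpr (hϱmp.trans hϱ1)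
  have hRne : ϱm - ϱp ≠ 0 := by linarith
  have hdne : ϱp - ϱm ≠ 0 := ne_of_gt hd
  have hk0 : (0:ℝ) ≤ (ϱ1 - ϱp) / (ϱ1 - ϱm) := le_of_lt (div_pos he0 he1)
  have hk1 : (0:ℝ) ≤ (ϱ1 - ϱm) / (ϱ1 - ϱp) := le_of_lt (div_pos he1 he0)
  have hk0lt : (ϱ1 - ϱp) / (ϱ1 - ϱm) < 1 := (div_lt_one he1).mpr (by linarith)
  have hk1gt : (1:ℝ) < (ϱ1 - ϱm) / (ϱ1 - ϱp) := (one_lt_div he0).mpr (by linarith)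
  have hs0lt : Real.sqrt (ϱm * ϱp * ((ϱ1 - ϱp) / (ϱ1 - ϱm))) < ϱp := by
    rw [Real.sqrt_lt' hϱp]; nlinarith [mul_pos hϱm hϱp]
  have hs1gt : ϱm < Real.sqrt (ϱm * ϱp * ((ϱ1 - ϱm) / (ϱ1 - ϱp))) := by
    rw [Real.lt_sqrt hϱm.le]; nlinarith [mul_pos hϱm hϱp]
  have hs1pos : 0 < Real.sqrt (ϱm * ϱp * ((ϱ1 - ϱm) / (ϱ1 - ϱp))) := hϱm.trans hs1gt
  -- basic limits
  have T2 : Filter.Tendsto (fun u : ℝ => (u ^ 2)⁻¹) Filter.atTop (nhds 0) :=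
    (Filter.tendsto_pow_atTop two_ne_zero).inv_tendsto_atTop
  have TB : Filter.Tendsto (fun u : ℝ => Bu ϱm ϱp pm pp u / u ^ 2) Filter.atTop
      (nhds (ϱm * ϱp)) := by
    have h : Filter.Tendsto (fun u : ℝ => ϱm * ϱp - (ϱp - ϱm) * (pp - pm) * (u ^ 2)⁻¹)
        Filter.atTop (nhds (ϱm * ϱp - (ϱp - ϱm) * (pp - pm) * 0)) :=
      tendsto_const_nhds.sub (tendsto_const_nhds.mul T2)
    rw [mul_zero, sub_zero] at h
    refine h.congr' ?_
    filter_upwards [Filter.eventually_gt_atTop 0] with u hu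
    have hu2 : u ^ 2 ≠ 0 := by positivity
    rw [Bu]; field_simp
  have TF : ∀ k : ℝ, 0 ≤ k →
      Filter.Tendsto (fun u : ℝ => Real.sqrt (Bu ϱm ϱp pm pp u * k) / u) Filter.atTop
        (nhds (Real.sqrt (ϱm * ϱp * k))) := by
    intro k hk
    have h : Filter.Tendsto (fun u : ℝ => Real.sqrt (Bu ϱm ϱp pm pp u / u ^ 2 * k))
        Filter.atTop (nhds (Real.sqrt (ϱm * ϱp * k))) :=
      (Real.continuous_sqrt.tendsto _).comp (TB.mul_const k)
    refine h.congr' ?_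
    filter_upwards [Filter.eventually_gt_atTop 0] with u hu
    have h2 : Bu ϱm ϱp pm pp u / u ^ 2 * k = Bu ϱm ϱp pm pp u * k * (u ^ 2)⁻¹ := by ring
    rw [h2, Real.sqrt_mul' _ (by positivity : (0:ℝ) ≤ (u ^ 2)⁻¹), Real.sqrt_inv,
      Real.sqrt_sq hu.le, div_eq_mul_inv]
  -- abbreviations for the limits
  set s0 : ℝ := Real.sqrt (ϱm * ϱp * ((ϱ1 - ϱp) / (ϱ1 - ϱm))) with hs0e
  set s1 : ℝ := Real.sqrt (ϱm * ϱp * ((ϱ1 - ϱm) / (ϱ1 - ϱp))) with hs1e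
  set c0 : ℝ := (s0 - ϱp) / (ϱp - ϱm) with hc0e
  set c1 : ℝ := (s1 - ϱp) / (ϱp - ϱm) with hc1e
  have hc0neg : c0 < 0 := div_neg_of_neg_of_pos (by linarith) hd
  have hc0ne : c0 ≠ 0 := ne_of_lt hc0neg
  have hc11 : 0 < c1 + 1 := by
    have h : c1 + 1 = (s1 - ϱm) / (ϱp - ϱm) := by rw [hc1e]; field_simp; ring
    rw [h]; exact div_pos (by linarith) hd
  have hc11ne : c1 + 1 ≠ 0 := ne_of_gt hc11
  -- scaled interface-speed limits
  have TG0 : Filter.Tendsto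
      (fun u : ℝ => (Real.sqrt (Bu ϱm ϱp pm pp u * ((ϱ1 - ϱp) / (ϱ1 - ϱm))) / u - ϱp) /
        (ϱp - ϱm)) Filter.atTop (nhds c0) :=
    ((TF _ hk0).sub_const ϱp).div_const _
  have TG1 : Filter.Tendsto
      (fun u : ℝ => (Real.sqrt (Bu ϱm ϱp pm pp u * ((ϱ1 - ϱm) / (ϱ1 - ϱp))) / u - ϱp) /
        (ϱp - ϱm)) Filter.atTop (nhds c1) :=
    ((TF _ hk1).sub_const ϱp).div_const _
  -- first ratio in Y tends to -1
  have Tr0 : Filter.Tendsto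
      (fun u : ℝ => (vm + mu0u ϱm ϱp pm pp ϱ1 vm u) / (vm - mu0u ϱm ϱp pm pp ϱ1 vm u))
      Filter.atTop (nhds (-1)) := by
    have hnum : Filter.Tendsto (fun u : ℝ => (vm + mu0u ϱm ϱp pm pp ϱ1 vm u) / u)
        Filter.atTop (nhds c0) := by
      have h := (tendsto_inv_atTop_zero.const_mul (2*vm)).add TG0
      rw [mul_zero, zero_add] at h
      refine h.congr' ?_
      filter_upwards [Filter.eventually_gt_atTop 0] with u hu
      rw [mu0u]
      field_simp
      ring
    have hden : Filter.Tendsto (fun u : ℝ => (vm - mu0u ϱm ϱp pm pp ϱ1 vm u) / u)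
        Filter.atTop (nhds (-c0)) := by
      refine TG0.neg.congr' ?_
      filter_upwards [Filter.eventually_gt_atTop 0] with u hu
      rw [mu0u]
      field_simp
      ring
    have h := hnum.div hden (neg_ne_zero.mpr hc0ne)
    rw [div_neg, div_self hc0ne] at h
    refine h.congr' ?_
    filter_upwards [Filter.eventually_gt_atTop 0] with u hu
    exact divdiv _ _ _ (ne_of_gt hu)
  -- second ratio in Y
  have Tr1 : Filter.Tendsto
      (fun u : ℝ => (mu1u ϱm ϱp pm pp ϱ1 vm u + (vm - u)) /
        (mu1u ϱm ϱp pm pp ϱ1 vm u - (vm - u)))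
      Filter.atTop (nhds ((c1 - 1) / (c1 + 1))) := by
    have hnum : Filter.Tendsto (fun u : ℝ => (mu1u ϱm ϱp pm pp ϱ1 vm u + (vm - u)) / u)
        Filter.atTop (nhds (c1 - 1)) := by
      have h := (tendsto_inv_atTop_zero.const_mul (2*vm)).add (TG1.sub_const 1)
      rw [mul_zero, zero_add] at h
      refine h.congr' ?_
      filter_upwards [Filter.eventually_gt_atTop 0] with u hu
      rw [mu1u]
      field_simp
      ring
    have hden : Filter.Tendsto (fun u : ℝ => (mu1u ϱm ϱp pm pp ϱ1 vm u - (vm - u)) / u)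
        Filter.atTop (nhds (c1 + 1)) := by
      refine (TG1.add_const 1).congr' ?_
      filter_upwards [Filter.eventually_gt_atTop 0] with u hu
      rw [mu1u]
      field_simp
      ring
    have h := hnum.div hden hc11ne
    refine h.congr' ?_
    filter_upwards [Filter.eventually_gt_atTop 0] with u hu
    exact divdiv _ _ _ (ne_of_gt hu)
  -- limit of Y and of the denominator Y + ϱ1 R
  have TY : Filter.Tendsto (fun u : ℝ => Yu ϱm ϱp pm pp ϱ1 vm u) Filter.atTop
      (nhds (ϱ1 * ϱp * (-1) + ϱ1 * ϱm * ((c1 - 1) / (c1 + 1)))) := by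
    have h := (Tr0.const_mul (ϱ1 * ϱp)).add (Tr1.const_mul (ϱ1 * ϱm))
    simp only [Yu]
    exact h
  set LY : ℝ := ϱ1 * ϱp * (-1) + ϱ1 * ϱm * ((c1 - 1) / (c1 + 1)) with hLYe
  set DL : ℝ := LY + ϱ1 * (ϱm - ϱp) with hDLe
  have Tden : Filter.Tendsto (fun u : ℝ => Yu ϱm ϱp pm pp ϱ1 vm u + ϱ1 * (ϱm - ϱp))
      Filter.atTop (nhds DL) := TY.add_const _
  have hkey : c1 * (ϱp - ϱm) = s1 - ϱp := by
    rw [hc1e]; exact div_mul_cancel₀ _ hdne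
  have hdc : (c1 - 1) / (c1 + 1) * (c1 + 1) = c1 - 1 := div_mul_cancel₀ _ hc11ne
  have hLYneg : LY < 0 := by
    have hmul : LY * (c1 + 1) = -(ϱ1 * (s1 + ϱm)) := by
      rw [hLYe]
      linear_combination (ϱ1 * ϱm) * hdc - ϱ1 * hkey
    have h := eq_div_of_mul_eq hc11ne hmul
    rw [h]
    exact div_neg_of_neg_of_pos (by nlinarith) hc11
  have hDLneg : DL < 0 := by
    have hmul : DL * (c1 + 1) = -(2 * ϱ1 * s1) := by
      rw [hDLe, hLYe]
      linear_combination (ϱ1 * ϱm) * hdc - 2 * ϱ1 * hkey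
    have h := eq_div_of_mul_eq hc11ne hmul
    rw [h]
    exact div_neg_of_neg_of_pos (by nlinarith) hc11
  -- limit of Z / u^2
  have Tm1 : Filter.Tendsto (fun u : ℝ => ((vm - u) - mu1u ϱm ϱp pm pp ϱ1 vm u) / u)
      Filter.atTop (nhds (-1 - c1)) := by
    have h : Filter.Tendsto (fun u : ℝ =>
        (-1 : ℝ) - (Real.sqrt (Bu ϱm ϱp pm pp u * ((ϱ1 - ϱm) / (ϱ1 - ϱp))) / u - ϱp) /
          (ϱp - ϱm)) Filter.atTop (nhds (-1 - c1)) := tendsto_const_nhds.sub TG1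
    refine h.congr' ?_
    filter_upwards [Filter.eventually_gt_atTop 0] with u hu
    rw [mu1u]
    field_simp
    ring
  set ZL : ℝ := pp * 0 + (ϱ1 - ϱp) * ϱp / ϱ1 * (-1 - c1) ^ 2 with hZLe
  have TZq : Filter.Tendsto (fun u : ℝ => Zu ϱm ϱp pm pp ϱ1 vm u / u ^ 2) Filter.atTop
      (nhds ZL) := by
    have h := (T2.const_mul pp).add ((Tm1.pow 2).const_mul ((ϱ1 - ϱp) * ϱp / ϱ1))
    refine h.congr' ?_
    filter_upwards [Filter.eventually_gt_atTop 0] with u hu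
    have hu2 : (u : ℝ) ^ 2 ≠ 0 := by positivity
    rw [Zu, add_div, mul_div_assoc, div_pow, div_eq_mul_inv pp]
    ring
  have hZLpos : 0 < ZL := by
    rw [hZLe, mul_zero, zero_add]
    have h2 : 0 < (-1 - c1) ^ 2 := by nlinarith
    exact mul_pos (by positivity) h2
  -- p1 / u^2 and its positive limit
  have Tp1q : Filter.Tendsto (fun u : ℝ => p1u cv ϱm ϱp pm pp ϱ1 vm u / u ^ 2)
      Filter.atTop (nhds ((LY * ZL - Xu cv ϱm ϱp pm pp ϱ1 * 0) / DL)) := by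
    have h := ((TY.mul TZq).sub (T2.const_mul (Xu cv ϱm ϱp pm pp ϱ1))).div Tden
      (ne_of_lt hDLneg)
    refine h.congr' ?_
    filter_upwards [Filter.eventually_gt_atTop 0] with u hu
    have hu2 : (u : ℝ) ^ 2 ≠ 0 := by positivity
    simp only [p1u, Pi.div_apply]
    rw [div_right_comm]
    field_simp
  have hQ1pos : 0 < (LY * ZL - Xu cv ϱm ϱp pm pp ϱ1 * 0) / DL := by
    refine div_pos_of_neg_of_neg ?_ hDLneg
    have h := mul_neg_of_neg_of_pos hLYneg hZLpos
    nlinarith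
  have E1 : ∀ᶠ u : ℝ in Filter.atTop, 0 < p1u cv ϱm ϱp pm pp ϱ1 vm u / u ^ 2 :=
    Tp1q.eventually (eventually_gt_nhds hQ1pos)
  -- eps1 / u^2 and its positive limit
  have Teq : Filter.Tendsto (fun u : ℝ => eps1u cv ϱm ϱp pm pp ϱ1 vm u / u ^ 2)
      Filter.atTop
      (nhds ((ϱ1 * (ϱm - ϱp) * ZL + Xu cv ϱm ϱp pm pp ϱ1 * 0) / (ϱ1 * DL))) := by
    have h := ((TZq.const_mul (ϱ1 * (ϱm - ϱp))).add
        (T2.const_mul (Xu cv ϱm ϱp pm pp ϱ1))).div (Tden.const_mul ϱ1)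
      (ne_of_lt (mul_neg_of_pos_of_neg hϱ1p hDLneg))
    refine h.congr' ?_
    filter_upwards [Filter.eventually_gt_atTop 0] with u hu
    have hu2 : (u : ℝ) ^ 2 ≠ 0 := by positivity
    simp only [eps1u, Pi.div_apply]
    rw [div_right_comm]
    field_simp
  have hQ2pos : 0 < (ϱ1 * (ϱm - ϱp) * ZL + Xu cv ϱm ϱp pm pp ϱ1 * 0) / (ϱ1 * DL) := by
    refine div_pos_of_neg_of_neg ?_ (mul_neg_of_pos_of_neg hϱ1p hDLneg)
    have h := mul_neg_of_neg_of_pos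
      (mul_neg_of_pos_of_neg hϱ1p (show ϱm - ϱp < 0 by linarith)) hZLpos
    nlinarith
  have E2 : ∀ᶠ u : ℝ in Filter.atTop, 0 < eps1u cv ϱm ϱp pm pp ϱ1 vm u / u ^ 2 :=
    Teq.eventually (eventually_gt_nhds hQ2pos)
  -- conclusion
  obtain ⟨a, ha⟩ := Filter.eventually_atTop.mp ((E1.and E2).and (Filter.eventually_gt_atTop 0))
  refine ⟨max a 1, lt_of_lt_of_le one_pos (le_max_right a 1), fun u hu => ?_⟩
  obtain ⟨⟨h1, h2⟩, hu0⟩ := ha u (le_trans (le_max_left a 1) hu)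
  have hu2 : (0 : ℝ) < u ^ 2 := by positivity
  constructor
  · have h := mul_pos h1 hu2
    rwa [div_mul_cancel₀ _ (ne_of_gt hu2)] at h
  · have h := mul_pos h2 hu2
    rwa [div_mul_cancel₀ _ (ne_of_gt hu2)] at h
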